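/- Define the vector field W on ℝ² \ {0} by W(x) = ν Δu(x) − ((u·∇)u)(x), where Δu is the componentwise Laplacian and ((u·∇)u)(x) is the derivative of u at x applied to u(x). Then for every x ≠ 0 the scalar curl of W satisfies (∂₁W₂ − ∂₂W₁)(x) = −(ν/|x|) · Q'(|x|), where Q(ρ) = ρ·(−α₂ + (α₁ − α₂(ρ − δ))/ρ − h(ρ − δ)/ρ²), and there exists r₀ > 0 such that this scalar curl is nonzero for all x with δ < |x| < δ + r₀; in particular W is not the gradient of any C¹ function on any open set meeting the region δ < |x| < δ + r₀. -/

import Mathlib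

noncomputable section

/-- Poiseuille-type speed profile `h(r) = α₁ r − (α₂/2) r²`. -/
def prof (α₁ α₂ r : ℝ) : ℝ := α₁ * r - α₂ / 2 * r ^ 2

/-- Euclidean norm on `ℝ × ℝ`. -/
def nrm (x : ℝ × ℝ) : ℝ := Real.sqrt (x.1 ^ 2 + x.2 ^ 2)

/-- Parallel laminar flow `u(x) = h(|x| − δ) (x₂, −x₁)/|x|` around the origin. -/
def vel (δ α₁ α₂ : ℝ) (x : ℝ × ℝ) : ℝ × ℝ :=
  (prof α₁ α₂ (nrm x - δ) / nrm x) • (x.2, -x.1)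

/-- Componentwise Laplacian of a planar vector field. -/
def lap (f : ℝ × ℝ → ℝ × ℝ) (x : ℝ × ℝ) : ℝ × ℝ :=
  fderiv ℝ (fun y => fderiv ℝ f y (1, 0)) x (1, 0) +
  fderiv ℝ (fun y => fderiv ℝ f y (0, 1)) x (0, 1)

/-- Gradient of a scalar function on `ℝ × ℝ`. -/
def grad (p : ℝ × ℝ → ℝ) (x : ℝ × ℝ) : ℝ × ℝ :=
  (fderiv ℝ p x (1, 0), fderiv ℝ p x (0, 1))

/-- Scalar curl `∂₁W₂ − ∂₂W₁` of a planar vector field. -/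
def scurl (W : ℝ × ℝ → ℝ × ℝ) (x : ℝ × ℝ) : ℝ :=
  fderiv ℝ (fun y => (W y).2) x (1, 0) - fderiv ℝ (fun y => (W y).1) x (0, 1)

namespace CurlAux

abbrev fstL : ℝ × ℝ →L[ℝ] ℝ := ContinuousLinearMap.fst ℝ ℝ ℝ
abbrev sndL : ℝ × ℝ →L[ℝ] ℝ := ContinuousLinearMap.snd ℝ ℝ ℝ

def kf (δ α₁ α₂ ρ : ℝ) : ℝ := prof α₁ α₂ (ρ - δ) / ρ
def kg (δ α₁ α₂ ρ : ℝ) : ℝ := (α₁ - α₂ * (ρ - δ)) / ρ - prof α₁ α₂ (ρ - δ) / ρ ^ 2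
def kh (δ α₁ α₂ ρ : ℝ) : ℝ :=
  -α₂ / ρ - 2 * (α₁ - α₂ * (ρ - δ)) / ρ ^ 2 + 2 * prof α₁ α₂ (ρ - δ) / ρ ^ 3
def kj (δ α₁ α₂ ρ : ℝ) : ℝ :=
  3 * α₂ / ρ ^ 2 + 6 * (α₁ - α₂ * (ρ - δ)) / ρ ^ 3 - 6 * prof α₁ α₂ (ρ - δ) / ρ ^ 4
def qd (δ α₁ α₂ ρ : ℝ) : ℝ :=
  -2 * α₂ - (α₁ - α₂ * (ρ - δ)) / ρ + prof α₁ α₂ (ρ - δ) / ρ ^ 2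

variable {δ α₁ α₂ : ℝ}

lemma hasDerivAt_prof (ρ : ℝ) :
    HasDerivAt (fun t => prof α₁ α₂ (t - δ)) (α₁ - α₂ * (ρ - δ)) ρ := by
  have h1 : HasDerivAt (fun t : ℝ => t - δ) 1 ρ := (hasDerivAt_id ρ).sub_const δ
  have h2 := (h1.const_mul α₁).fun_sub ((h1.pow 2).const_mul (α₂ / 2))
  simp only [prof]
  convert! h2 using 1
  push_cast
  ring

lemma hasDerivAt_kf {ρ : ℝ} (hρ : ρ ≠ 0) :
    HasDerivAt (fun t => kf δ α₁ α₂ t) (kg δ α₁ α₂ ρ) ρ := by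
  have h := (hasDerivAt_prof (δ := δ) (α₁ := α₁) (α₂ := α₂) ρ).fun_div (hasDerivAt_id' (x := ρ)) hρ
  simp only [kf, kg]
  convert! h using 1
  field_simp

lemma hasDerivAt_kg {ρ : ℝ} (hρ : ρ ≠ 0) :
    HasDerivAt (fun t => kg δ α₁ α₂ t) (kh δ α₁ α₂ ρ) ρ := by
  have h1 : HasDerivAt (fun t : ℝ => α₁ - α₂ * (t - δ)) (-α₂) ρ := by
    have := (hasDerivAt_const ρ α₁).fun_sub (((hasDerivAt_id ρ).sub_const δ).const_mul α₂)
    simpa using this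
  have h := (h1.fun_div (hasDerivAt_id' (x := ρ)) hρ).fun_sub
    ((hasDerivAt_prof (δ := δ) (α₁ := α₁) (α₂ := α₂) ρ).fun_div (hasDerivAt_pow 2 ρ)
      (pow_ne_zero 2 hρ))
  simp only [kg, kh]
  convert! h using 1
  field_simp
  ring

lemma hasDerivAt_kh {ρ : ℝ} (hρ : ρ ≠ 0) :
    HasDerivAt (fun t => kh δ α₁ α₂ t) (kj δ α₁ α₂ ρ) ρ := by
  have h1 : HasDerivAt (fun t : ℝ => α₁ - α₂ * (t - δ)) (-α₂) ρ := by
    have := (hasDerivAt_const ρ α₁).fun_sub (((hasDerivAt_id ρ).sub_const δ).const_mul α₂)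
    simpa using this
  have h := (((hasDerivAt_const ρ (-α₂)).fun_div (hasDerivAt_id' (x := ρ)) hρ).fun_sub
      ((h1.const_mul 2).fun_div (hasDerivAt_pow 2 ρ) (pow_ne_zero 2 hρ))).fun_add
    (((hasDerivAt_prof (δ := δ) (α₁ := α₁) (α₂ := α₂) ρ).const_mul 2).fun_div
      (hasDerivAt_pow 3 ρ) (pow_ne_zero 3 hρ))
  simp only [kh, kj]
  convert! h using 1
  field_simp
  ring

lemma nrm_sq (x : ℝ × ℝ) : nrm x ^ 2 = x.1 ^ 2 + x.2 ^ 2 :=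
  Real.sq_sqrt (by positivity)

lemma sq_add_pos {x : ℝ × ℝ} (hx : x ≠ 0) : 0 < x.1 ^ 2 + x.2 ^ 2 := by
  have h1 : x.1 ≠ 0 ∨ x.2 ≠ 0 := by
    by_contra h
    push_neg at h
    exact hx (Prod.ext h.1 h.2)
  rcases h1 with h | h
  · have : 0 < |x.1| := abs_pos.2 h
    nlinarith [sq_nonneg x.2, sq_abs x.1]
  · have : 0 < |x.2| := abs_pos.2 h
    nlinarith [sq_nonneg x.1, sq_abs x.2]

lemma nrm_pos {x : ℝ × ℝ} (hx : x ≠ 0) : 0 < nrm x :=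
  Real.sqrt_pos.2 (sq_add_pos hx)

lemma nrm_ne {x : ℝ × ℝ} (hx : x ≠ 0) : nrm x ≠ 0 := ne_of_gt (nrm_pos hx)

def nrmD (x : ℝ × ℝ) : ℝ × ℝ →L[ℝ] ℝ :=
  (x.1 / nrm x) • fstL + (x.2 / nrm x) • sndL

@[simp] lemma nrmD_apply (x v : ℝ × ℝ) :
    nrmD x v = x.1 / nrm x * v.1 + x.2 / nrm x * v.2 := by
  simp [nrmD]

lemma hasFDerivAt_nrm {x : ℝ × ℝ} (hx : x ≠ 0) : HasFDerivAt nrm (nrmD x) x := by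
  have h1 : HasFDerivAt (fun y : ℝ × ℝ => y.1 ^ 2 + y.2 ^ 2)
      ((x.1 • fstL + x.1 • fstL) + (x.2 • sndL + x.2 • sndL)) x := by
    have hf1 : HasFDerivAt (fun y : ℝ × ℝ => y.1) fstL x := hasFDerivAt_fst
    have hf2 : HasFDerivAt (fun y : ℝ × ℝ => y.2) sndL x := hasFDerivAt_snd
    have h := (hf1.mul hf1).add (hf2.mul hf2)
    have hfun : (fun y : ℝ × ℝ => y.1 ^ 2 + y.2 ^ 2)
        = fun y : ℝ × ℝ => y.1 * y.1 + y.2 * y.2 := by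
      funext y; ring
    rw [hfun]
    exact h
  have hs := (Real.hasDerivAt_sqrt (ne_of_gt (sq_add_pos hx))).comp_hasFDerivAt x h1
  have hfun : nrm = fun y : ℝ × ℝ => Real.sqrt (y.1 ^ 2 + y.2 ^ 2) := by
    funext y; rfl
  rw [hfun]
  have hCLM : nrmD x = (1 / (2 * Real.sqrt (x.1 ^ 2 + x.2 ^ 2))) •
      (x.1 • fstL + x.1 • fstL + (x.2 • sndL + x.2 • sndL)) := by
    refine ContinuousLinearMap.ext fun v => ?_
    have hs' : Real.sqrt (x.1 ^ 2 + x.2 ^ 2) = nrm x := rfl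
    simp only [ContinuousLinearMap.smul_apply, ContinuousLinearMap.add_apply,
      nrmD_apply, smul_eq_mul, ContinuousLinearMap.coe_fst',
      ContinuousLinearMap.coe_snd', fstL, sndL]
    rw [hs']
    field_simp
    ring
  rw [hCLM]
  exact hs

lemma comp_nrm {x : ℝ × ℝ} (hx : x ≠ 0) {f : ℝ → ℝ} {f' : ℝ}
    (hf : HasDerivAt f f' (nrm x)) :
    HasFDerivAt (fun y => f (nrm y)) (f' • nrmD x) x := by
  simpa [Function.comp_def] using hf.comp_hasFDerivAt x (hasFDerivAt_nrm hx)


lemma hfstL {x : ℝ × ℝ} : HasFDerivAt (fun y : ℝ × ℝ => y.1) fstL x := hasFDerivAt_fst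
lemma hsndL {x : ℝ × ℝ} : HasFDerivAt (fun y : ℝ × ℝ => y.2) sndL x := hasFDerivAt_snd

lemma vel_eq : vel δ α₁ α₂ =
    fun y => (kf δ α₁ α₂ (nrm y) * y.2, -(kf δ α₁ α₂ (nrm y) * y.1)) := by
  funext y
  simp only [vel, kf, Prod.smul_mk, smul_eq_mul, mul_neg]

lemma vel_fderiv {x : ℝ × ℝ} (hx : x ≠ 0) (v : ℝ × ℝ) :
    fderiv ℝ (vel δ α₁ α₂) x v =
      (kf δ α₁ α₂ (nrm x) * v.2
          + kg δ α₁ α₂ (nrm x) * (x.1 * v.1 + x.2 * v.2) / nrm x * x.2,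
        -(kf δ α₁ α₂ (nrm x) * v.1
          + kg δ α₁ α₂ (nrm x) * (x.1 * v.1 + x.2 * v.2) / nrm x * x.1)) := by
  have hr := nrm_ne hx
  have hc := comp_nrm hx (hasDerivAt_kf (δ := δ) (α₁ := α₁) (α₂ := α₂) hr)
  have H := (hc.fun_mul hsndL).prodMk (hc.fun_mul hfstL).fun_neg
  rw [vel_eq, H.fderiv]
  simp only [ContinuousLinearMap.prod_apply, ContinuousLinearMap.add_apply,
    ContinuousLinearMap.smul_apply, ContinuousLinearMap.neg_apply,
    ContinuousLinearMap.coe_fst', ContinuousLinearMap.coe_snd', nrmD_apply,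
    smul_eq_mul, fstL, sndL, Prod.mk.injEq]
  constructor
  · field_simp
  · field_simp

lemma lap_vel {x : ℝ × ℝ} (hx : x ≠ 0) :
    lap (vel δ α₁ α₂) x =
      ((kh δ α₁ α₂ (nrm x) + 3 * (kg δ α₁ α₂ (nrm x) / nrm x)) * x.2,
        -((kh δ α₁ α₂ (nrm x) + 3 * (kg δ α₁ α₂ (nrm x) / nrm x)) * x.1)) := by
  have hr := nrm_ne hx
  have h2 : x.1 ^ 2 + x.2 ^ 2 = nrm x ^ 2 := (nrm_sq x).symm
  have hmg : HasDerivAt (fun ρ => kg δ α₁ α₂ ρ / ρ)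
      ((kh δ α₁ α₂ (nrm x) * nrm x - kg δ α₁ α₂ (nrm x) * 1) / nrm x ^ 2) (nrm x) :=
    (hasDerivAt_kg hr).div (hasDerivAt_id _) hr
  have hm := comp_nrm hx hmg
  have hf := comp_nrm hx (hasDerivAt_kf (δ := δ) (α₁ := α₁) (α₂ := α₂) hr)
  have Hd := ((hm.fun_mul hfstL).fun_mul hsndL).prodMk (hf.fun_add ((hm.fun_mul hfstL).fun_mul hfstL)).fun_neg
  have He := (hf.fun_add ((hm.fun_mul hsndL).fun_mul hsndL)).prodMk ((hm.fun_mul hfstL).fun_mul hsndL).fun_neg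
  have hopen : {y : ℝ × ℝ | y ≠ (0 : ℝ × ℝ)} ∈ nhds x :=
    IsOpen.mem_nhds isOpen_compl_singleton hx
  have hev1 : (fun y => fderiv ℝ (vel δ α₁ α₂) y (1, 0)) =ᶠ[nhds x]
      (fun y => (kg δ α₁ α₂ (nrm y) / nrm y * y.1 * y.2,
        -(kf δ α₁ α₂ (nrm y) + kg δ α₁ α₂ (nrm y) / nrm y * y.1 * y.1))) := by
    filter_upwards [hopen] with y hy
    rw [vel_fderiv hy]
    simp only [Prod.mk.injEq]
    constructor
    · ring
    · ring
  have hev2 : (fun y => fderiv ℝ (vel δ α₁ α₂) y (0, 1)) =ᶠ[nhds x]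
      (fun y => (kf δ α₁ α₂ (nrm y) + kg δ α₁ α₂ (nrm y) / nrm y * y.2 * y.2,
        -(kg δ α₁ α₂ (nrm y) / nrm y * y.1 * y.2))) := by
    filter_upwards [hopen] with y hy
    rw [vel_fderiv hy]
    simp only [Prod.mk.injEq]
    constructor
    · ring
    · ring
  rw [lap, hev1.fderiv_eq, hev2.fderiv_eq, Hd.fderiv, He.fderiv]
  simp only [ContinuousLinearMap.prod_apply, ContinuousLinearMap.add_apply,
    ContinuousLinearMap.smul_apply, ContinuousLinearMap.neg_apply,
    ContinuousLinearMap.coe_fst', ContinuousLinearMap.coe_snd', nrmD_apply,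
    smul_eq_mul, fstL, sndL, Prod.mk_add_mk, Prod.mk.injEq]
  have hrt : nrm x * (nrm x)⁻¹ = 1 := mul_inv_cancel₀ hr
  constructor
  · linear_combination (((kh δ α₁ α₂ (nrm x) * nrm x - kg δ α₁ α₂ (nrm x)) / nrm x ^ 2)
      * x.2 / nrm x) * h2
      + (kh δ α₁ α₂ (nrm x) * x.2 * (nrm x ^ 2 * (nrm x)⁻¹ ^ 2 + nrm x * (nrm x)⁻¹ + 1)
        - kg δ α₁ α₂ (nrm x) * x.2 * (nrm x)⁻¹ * (nrm x * (nrm x)⁻¹ + 1)) * hrt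
  · linear_combination (-(((kh δ α₁ α₂ (nrm x) * nrm x - kg δ α₁ α₂ (nrm x)) / nrm x ^ 2)
      * x.1 / nrm x)) * h2
      + (kg δ α₁ α₂ (nrm x) * x.1 * (nrm x)⁻¹ * (nrm x * (nrm x)⁻¹ + 1)
        - kh δ α₁ α₂ (nrm x) * x.1 * (nrm x ^ 2 * (nrm x)⁻¹ ^ 2 + nrm x * (nrm x)⁻¹ + 1)) * hrt


lemma W_parts (ν : ℝ) {x : ℝ × ℝ} (hx : x ≠ 0) {W : ℝ × ℝ → ℝ × ℝ}
    (hW : W = fun y =>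
      ν • lap (vel δ α₁ α₂) y - fderiv ℝ (vel δ α₁ α₂) y (vel δ α₁ α₂ y)) :
    ∃ D1 D2 : ℝ × ℝ →L[ℝ] ℝ,
      HasFDerivAt (fun y => (W y).1) D1 x ∧ HasFDerivAt (fun y => (W y).2) D2 x ∧
      D2 (1, 0) - D1 (0, 1) = -(ν / nrm x) * qd δ α₁ α₂ (nrm x) := by
  have hr := nrm_ne hx
  have h2 : x.1 ^ 2 + x.2 ^ 2 = nrm x ^ 2 := (nrm_sq x).symm
  have hrt : nrm x * (nrm x)⁻¹ = 1 := mul_inv_cancel₀ hr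
  have hopen : {y : ℝ × ℝ | y ≠ (0 : ℝ × ℝ)} ∈ nhds x :=
    IsOpen.mem_nhds isOpen_compl_singleton hx
  have hWev : W =ᶠ[nhds x] (fun y =>
      (kf δ α₁ α₂ (nrm y) * kf δ α₁ α₂ (nrm y) * y.1
         + ν * ((kh δ α₁ α₂ (nrm y) + 3 * (kg δ α₁ α₂ (nrm y) / nrm y)) * y.2),
       kf δ α₁ α₂ (nrm y) * kf δ α₁ α₂ (nrm y) * y.2
         - ν * ((kh δ α₁ α₂ (nrm y) + 3 * (kg δ α₁ α₂ (nrm y) / nrm y)) * y.1))) := by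
    filter_upwards [hopen] with y hy
    rw [hW]
    show ν • lap (vel δ α₁ α₂) y - fderiv ℝ (vel δ α₁ α₂) y (vel δ α₁ α₂ y) = _
    rw [lap_vel hy, vel_fderiv hy (vel δ α₁ α₂ y), vel_eq]
    simp only [Prod.smul_mk, smul_eq_mul, Prod.mk_sub_mk, Prod.mk.injEq]
    constructor
    · ring
    · ring
  have hf := comp_nrm hx (hasDerivAt_kf (δ := δ) (α₁ := α₁) (α₂ := α₂) hr)
  have hph : HasDerivAt (fun ρ => kh δ α₁ α₂ ρ + 3 * (kg δ α₁ α₂ ρ / ρ))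
      (kj δ α₁ α₂ (nrm x)
        + 3 * ((kh δ α₁ α₂ (nrm x) * nrm x - kg δ α₁ α₂ (nrm x) * 1) / nrm x ^ 2))
      (nrm x) :=
    (hasDerivAt_kh hr).add (((hasDerivAt_kg hr).div (hasDerivAt_id _) hr).const_mul 3)
  have hP := comp_nrm hx hph
  have hw1 := ((hf.mul hf).mul hfstL).add ((hP.mul hsndL).const_mul ν)
  have hw2 := ((hf.mul hf).mul hsndL).sub ((hP.mul hfstL).const_mul ν)
  have hW1 := hw1.congr_of_eventuallyEq (hWev.mono fun y hy => congrArg Prod.fst hy)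
  have hW2 := hw2.congr_of_eventuallyEq (hWev.mono fun y hy => congrArg Prod.snd hy)
  refine ⟨_, _, hW1, hW2, ?_⟩
  have step2 : -(ν * (nrm x * kj δ α₁ α₂ (nrm x) + 5 * kh δ α₁ α₂ (nrm x)
      + 3 * (kg δ α₁ α₂ (nrm x) / nrm x)))
      = -(ν / nrm x) * qd δ α₁ α₂ (nrm x) := by
    simp only [kj, kh, kg, qd]
    field_simp
    ring
  rw [← step2]
  simp only [ContinuousLinearMap.prod_apply, ContinuousLinearMap.add_apply,
    ContinuousLinearMap.sub_apply, ContinuousLinearMap.smul_apply,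
    ContinuousLinearMap.neg_apply, ContinuousLinearMap.coe_fst',
    ContinuousLinearMap.coe_snd', nrmD_apply, smul_eq_mul, fstL, sndL]
  linear_combination (-(ν * (kj δ α₁ α₂ (nrm x)
      + 3 * ((kh δ α₁ α₂ (nrm x) * nrm x - kg δ α₁ α₂ (nrm x) * 1) / nrm x ^ 2)) / nrm x)) * h2
    + (-(3 * ν * kh δ α₁ α₂ (nrm x))
      + 3 * ν * kg δ α₁ α₂ (nrm x) * (nrm x)⁻¹ * (nrm x * (nrm x)⁻¹ + 1)
      - 3 * ν * kh δ α₁ α₂ (nrm x) * nrm x * (nrm x)⁻¹ * (nrm x * (nrm x)⁻¹ + 1)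
      - ν * kj δ α₁ α₂ (nrm x) * nrm x) * hrt


lemma qd_neg (hδ : 0 < δ) (hα₁ : 0 < α₁) (hα₂ : 0 < α₂) {r : ℝ} (h : δ < r) :
    qd δ α₁ α₂ r < 0 := by
  have hr0 : 0 < r := hδ.trans h
  have heq : qd δ α₁ α₂ r
      = (-(α₂ * r ^ 2) - α₂ * r * δ - α₁ * δ - α₂ / 2 * (r - δ) ^ 2) / r ^ 2 := by
    simp only [qd, prof]
    field_simp
    ring
  rw [heq]
  apply div_neg_of_neg_of_pos
  · nlinarith [mul_pos (mul_pos hα₂ hr0) hr0, mul_pos (mul_pos hα₂ hr0) hδ,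
      mul_pos hα₁ hδ, mul_nonneg hα₂.le (sq_nonneg (r - δ))]
  · positivity

lemma ne_zero_of_nrm (hδ : 0 < δ) {x : ℝ × ℝ} (h : δ < nrm x) : x ≠ 0 := by
  intro h0
  rw [h0] at h
  simp [nrm] at h
  linarith

end CurlAux

open CurlAux

/-- The scalar curl of `W = ν Δu − (u·∇)u` equals `−(ν/|x|) Q'(|x|)` with
`Q(ρ) = ρ(−α₂ + (α₁ − α₂(ρ−δ))/ρ − h(ρ−δ)/ρ²)`; it is nonzero on a thin annulus
`δ < |x| < δ + r₀`, so `W` is not the gradient of any C¹ function on any open set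
meeting that annulus. -/
theorem curl_of_W_nonzero
    (ν δ α₁ α₂ : ℝ) (hν : 0 < ν) (hδ : 0 < δ) (hα₁ : 0 < α₁) (hα₂ : 0 < α₂)
    (W : ℝ × ℝ → ℝ × ℝ)
    (hW : W = fun x =>
      ν • lap (vel δ α₁ α₂) x - fderiv ℝ (vel δ α₁ α₂) x (vel δ α₁ α₂ x))
    (Q : ℝ → ℝ)
    (hQ : Q = fun ρ : ℝ =>
      ρ * (-α₂ + (α₁ - α₂ * (ρ - δ)) / ρ - prof α₁ α₂ (ρ - δ) / ρ ^ 2)) :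
    (∀ x : ℝ × ℝ, x ≠ 0 → scurl W x = -(ν / nrm x) * deriv Q (nrm x))
    ∧ ∃ r₀ : ℝ, 0 < r₀ ∧
        (∀ x : ℝ × ℝ, δ < nrm x → nrm x < δ + r₀ → scurl W x ≠ 0)
        ∧ ∀ U : Set (ℝ × ℝ), IsOpen U →
            (∃ x ∈ U, δ < nrm x ∧ nrm x < δ + r₀) →
            ¬ ∃ p : ℝ × ℝ → ℝ, ContDiffOn ℝ 1 p U ∧ ∀ x ∈ U, grad p x = W x := by
  have key : ∀ x : ℝ × ℝ, x ≠ 0 → scurl W x = -(ν / nrm x) * qd δ α₁ α₂ (nrm x) := by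
    intro x hx
    obtain ⟨D1, D2, h1, h2, hval⟩ := W_parts ν hx hW
    rw [scurl, h2.fderiv, h1.fderiv]
    exact hval
  have hQd : ∀ ρ : ℝ, ρ ≠ 0 → deriv Q ρ = qd δ α₁ α₂ ρ := by
    intro ρ hρ
    have h1 : HasDerivAt (fun t : ℝ => α₁ - α₂ * (t - δ)) (-α₂) ρ := by
      have := (hasDerivAt_const ρ α₁).fun_sub (((hasDerivAt_id ρ).sub_const δ).const_mul α₂)
      simpa using this
    have hid : HasDerivAt (fun t : ℝ => t) 1 ρ := hasDerivAt_id ρ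
    have hA := ((hasDerivAt_const ρ (-α₂)).fun_add (h1.fun_div hid hρ)).fun_sub
      ((hasDerivAt_prof (δ := δ) (α₁ := α₁) (α₂ := α₂) ρ).fun_div (hasDerivAt_pow 2 ρ)
        (pow_ne_zero 2 hρ))
    have hQ2 := hid.fun_mul hA
    rw [hQ, hQ2.deriv]
    simp only [qd, prof]
    field_simp
    ring
  have hnz : ∀ x : ℝ × ℝ, δ < nrm x → nrm x < δ + δ → scurl W x ≠ 0 := by
    intro x h1x _
    have hx := ne_zero_of_nrm hδ h1x
    rw [key x hx]
    have hq := qd_neg hδ hα₁ hα₂ h1x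
    have hr := nrm_pos hx
    have hneg : -(ν / nrm x) < 0 := neg_neg_iff_pos.mpr (div_pos hν hr) |>.le.lt_of_ne ?_
    · exact (mul_pos_of_neg_of_neg hneg hq).ne'
    · exact (neg_neg_iff_pos.mpr (div_pos hν hr)).ne
  refine ⟨fun x hx => by rw [key x hx, hQd (nrm x) (nrm_ne hx)], δ, hδ, hnz, ?_⟩
  rintro U hU ⟨x, hxU, hx1, hx2⟩ ⟨p, hp, hgrad⟩
  have hx := ne_zero_of_nrm hδ hx1
  obtain ⟨D1, D2, hW1, hW2, hval⟩ := W_parts ν hx hW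
  have hG : HasFDerivAt (fun y => (W y).1 • fstL + (W y).2 • sndL)
      (D1.smulRight fstL + D2.smulRight sndL) x :=
    (hW1.smul_const _).fun_add (hW2.smul_const sndL)
  have hev : ∀ᶠ y in nhds x, HasFDerivAt p ((W y).1 • fstL + (W y).2 • sndL) y := by
    filter_upwards [hU.mem_nhds hxU] with y hy
    have hdp : DifferentiableAt ℝ p y := (hp.contDiffAt (hU.mem_nhds hy)).differentiableAt one_ne_zero
    have hfd := hdp.hasFDerivAt
    have hgy := hgrad y hy
    have h1' : fderiv ℝ p y (1, 0) = (W y).1 := by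
      have := congrArg Prod.fst hgy
      simpa [grad] using this
    have h2' : fderiv ℝ p y (0, 1) = (W y).2 := by
      have := congrArg Prod.snd hgy
      simpa [grad] using this
    have hEq : fderiv ℝ p y = (W y).1 • fstL + (W y).2 • sndL := by
      refine ContinuousLinearMap.ext fun v => ?_
      have hv : v = v.1 • ((1 : ℝ), (0 : ℝ)) + v.2 • ((0 : ℝ), (1 : ℝ)) := by
        apply Prod.ext <;> simp
      conv_lhs => rw [hv]
      rw [map_add, map_smul, map_smul, h1', h2']
      simp only [ContinuousLinearMap.add_apply, ContinuousLinearMap.smul_apply,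
        ContinuousLinearMap.coe_fst', ContinuousLinearMap.coe_snd', fstL, sndL,
        smul_eq_mul]
      ring
    rw [← hEq]
    exact hfd
  have hsym := second_derivative_symmetric_of_eventually_of_real hev hG
    ((1 : ℝ), (0 : ℝ)) ((0 : ℝ), (1 : ℝ))
  have hcalc : D2 (1, 0) = D1 (0, 1) := by
    simp only [ContinuousLinearMap.add_apply, ContinuousLinearMap.smulRight_apply,
      ContinuousLinearMap.smul_apply, ContinuousLinearMap.coe_fst',
      ContinuousLinearMap.coe_snd', fstL, sndL, smul_eq_mul, mul_one, mul_zero,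
      add_zero, zero_add] at hsym
    linarith
  have hzero : scurl W x = 0 := by
    rw [scurl, hW2.fderiv, hW1.fderiv, hcalc, sub_self]
  exact hnz x hx1 hx2 hzero
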